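/- For Gaussian functions u(x) = α e^{-β|x|^2} with β > 0 and α ∈ C nonzero, equality holds in the second-order Heisenberg uncertainty principle: (∫_{R^N} |Δu|^2 dx)(∫_{R^N} |x|^2 |∇u|^2 dx) = ((N+2)^2/4)(∫_{R^N} |∇u|^2 dx)^2. -/

import Mathlib

open MeasureTheory

/-- `i`-th partial derivative of a complex-valued function on `ℝ^N`. -/
noncomputable def pd {N : ℕ} (u : EuclideanSpace ℝ (Fin N) → ℂ) (i : Fin N) :
    EuclideanSpace ℝ (Fin N) → ℂ :=
  fun x => fderiv ℝ u x (EuclideanSpace.single i 1)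

/-- Laplacian of a complex-valued function on `ℝ^N`. -/
noncomputable def lap {N : ℕ} (u : EuclideanSpace ℝ (Fin N) → ℂ) :
    EuclideanSpace ℝ (Fin N) → ℂ :=
  fun x => ∑ i, pd (pd u i) i x

/-- Squared Euclidean norm of the gradient of `u`. -/
noncomputable def gradNormSq {N : ℕ} (u : EuclideanSpace ℝ (Fin N) → ℂ) :
    EuclideanSpace ℝ (Fin N) → ℝ :=
  fun x => ∑ i, ‖pd u i x‖ ^ 2

open Real Set Filter

section aux

lemma normsq_eq {N : ℕ} (x : EuclideanSpace ℝ (Fin N)) : ‖x‖^2 = ∑ i, (x i)^2 := by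
  rw [EuclideanSpace.norm_eq, Real.sq_sqrt (by positivity)]
  simp [sq_abs]

lemma integrableJ {N : ℕ} (k : ℕ) {c : ℝ} (hc : 0 < c) :
    Integrable (fun x : EuclideanSpace ℝ (Fin N) => ‖x‖^(2*k) * Real.exp (-c * ‖x‖^2)) := by
  have base : Integrable (fun v : EuclideanSpace ℝ (Fin N) =>
      Complex.exp (-(c/2 : ℂ) * ‖v‖^2 + 0 * (inner ℝ (0 : EuclideanSpace ℝ (Fin N)) v : ℝ))) :=
    GaussianFourier.integrable_cexp_neg_mul_sq_norm_add_of_euclideanSpace (by simp [hc]) 0 0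
  have base' : Integrable (fun v : EuclideanSpace ℝ (Fin N) => Real.exp (-(c/2) * ‖v‖^2)) := by
    refine base.norm.congr (Eventually.of_forall fun v => ?_)
    simp only [Complex.norm_exp]
    norm_num
    left
    norm_cast
  have hM : ∀ t : ℝ, 0 ≤ t → t^(2*k) * Real.exp (-c * t^2)
      ≤ (k.factorial * (2/c)^k) * Real.exp (-(c/2) * t^2) := by
    intro t ht
    have h1 : ((c/2) * t^2)^k / k.factorial ≤ Real.exp ((c/2)*t^2) :=
      Real.pow_div_factorial_le_exp _ (by positivity) k
    have h2 : Real.exp ((c/2)*t^2) * Real.exp (-c * t^2) = Real.exp (-(c/2)*t^2) := by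
      rw [← Real.exp_add]; ring_nf
    have h3 : t^(2*k) = ((c/2) * t^2)^k * (2/c)^k := by
      have hone : ((c/2:ℝ) * (2/c))^k = 1 := by
        rw [div_mul_div_comm, mul_comm c 2, div_self (by positivity), one_pow]
      rw [mul_pow, mul_assoc, mul_comm ((t^2)^k), ← mul_assoc, ← mul_pow, hone, one_mul, pow_mul]
    have hfac : (0:ℝ) < k.factorial := by positivity
    calc t^(2*k) * Real.exp (-c * t^2)
        = ((c/2) * t^2)^k / k.factorial * ((k.factorial * (2/c)^k) * Real.exp (-c*t^2)) := by
          rw [h3]; field_simp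
      _ ≤ Real.exp ((c/2)*t^2) * ((k.factorial * (2/c)^k) * Real.exp (-c*t^2)) := by
          apply mul_le_mul_of_nonneg_right h1; positivity
      _ = (k.factorial * (2/c)^k) * Real.exp (-(c/2)*t^2) := by
          rw [← h2]; ring
  refine ((base'.const_mul (k.factorial * (2/c)^k)).mono' ?_ ?_)
  · exact (Continuous.mul (continuous_norm.pow _)
      (Real.continuous_exp.comp (continuous_const.mul (continuous_norm.pow 2)))).aestronglyMeasurable
  · refine Eventually.of_forall fun x => ?_
    rw [Real.norm_eq_abs, abs_of_nonneg (by positivity)]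
    exact hM ‖x‖ (norm_nonneg x)

lemma J_eq {N : ℕ} (hN : 1 ≤ N) (k : ℕ) {c : ℝ} (hc : 0 < c) :
    ∫ x : EuclideanSpace ℝ (Fin N), ‖x‖^(2*k) * Real.exp (-c * ‖x‖^2)
      = (N * (volume (Metric.ball (0 : EuclideanSpace ℝ (Fin N)) 1)).toReal)
        * (c ^ (-(((N:ℝ) + 2*k))/2) * (1/2) * Real.Gamma (((N:ℝ) + 2*k)/2)) := by
  haveI : Nonempty (Fin N) := ⟨⟨0, hN⟩⟩
  have h := MeasureTheory.integral_fun_norm_addHaar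
    (volume : Measure (EuclideanSpace ℝ (Fin N)))
    (fun r : ℝ => r^(2*k) * Real.exp (-c * r^2))
  rw [finrank_euclideanSpace_fin] at h
  rw [measureReal_def] at h
  rw [h]
  have inner_eq : ∫ y in Ioi (0:ℝ), y ^ (N-1) • (y^(2*k) * Real.exp (-c * y^2))
      = c ^ (-(((N:ℝ) + 2*k))/2) * (1/2) * Real.Gamma (((N:ℝ) + 2*k)/2) := by
    have e1 : ∀ y : ℝ, y ^ (N-1) • (y^(2*k) * Real.exp (-c * y^2))
        = y ^ ((((N-1+2*k : ℕ)):ℝ)) * Real.exp (-c * y^(2:ℝ)) := by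
      intro y
      rw [smul_eq_mul, ← mul_assoc, ← pow_add, Real.rpow_natCast, Real.rpow_two]
    simp_rw [e1]
    rw [integral_rpow_mul_exp_neg_mul_rpow (by norm_num)
      (lt_of_lt_of_le (by norm_num) (Nat.cast_nonneg _)) hc]
    have : ((((N-1+2*k : ℕ)):ℝ)) + 1 = (N:ℝ) + 2*k := by
      push_cast [Nat.cast_sub hN]
      ring
    rw [this]
  rw [inner_eq]
  rw [nsmul_eq_mul, smul_eq_mul]
  ring

lemma J_ratio {N : ℕ} (hN : 1 ≤ N) (k : ℕ) {c : ℝ} (hc : 0 < c) :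
    ∫ x : EuclideanSpace ℝ (Fin N), ‖x‖^(2*(k+1)) * Real.exp (-c * ‖x‖^2)
      = (((N:ℝ) + 2*k)/(2*c)) * ∫ x : EuclideanSpace ℝ (Fin N), ‖x‖^(2*k) * Real.exp (-c * ‖x‖^2) := by
  rw [J_eq hN (k+1) hc, J_eq hN k hc]
  have hs : (0:ℝ) < ((N:ℝ) + 2*k)/2 := by positivity
  have hg : Real.Gamma (((N:ℝ) + 2*(k+1))/2) = (((N:ℝ)+2*k)/2) * Real.Gamma (((N:ℝ)+2*k)/2) := by
    have : ((N:ℝ) + 2*(k+1))/2 = ((N:ℝ)+2*k)/2 + 1 := by push_cast; ring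
    rw [this, Real.Gamma_add_one (ne_of_gt hs)]
  have hr : c ^ (-(((N:ℝ) + 2*(k+1)))/2) = c ^ (-(((N:ℝ) + 2*k))/2) * c⁻¹ := by
    rw [← Real.rpow_neg_one c, ← Real.rpow_add hc]
    congr 1
    push_cast; ring
  push_cast at hg hr ⊢
  rw [hg, hr]
  field_simp

variable {N : ℕ} (α : ℂ) (β : ℝ)

lemma pd_eq {N : ℕ} {u : EuclideanSpace ℝ (Fin N) → ℂ} {L : EuclideanSpace ℝ (Fin N) →L[ℝ] ℂ}
    {x : EuclideanSpace ℝ (Fin N)} (h : HasFDerivAt u L x) (i : Fin N) :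
    pd u i x = L (EuclideanSpace.single i 1) := by
  rw [pd, h.fderiv]

lemma normsq_hasFDerivAt (x : EuclideanSpace ℝ (Fin N)) :
    HasFDerivAt (fun y : EuclideanSpace ℝ (Fin N) => ‖y‖^2)
      ((fderivInnerCLM ℝ (x,x)).comp
        ((ContinuousLinearMap.id ℝ _).prod (ContinuousLinearMap.id ℝ _))) x := by
  have h := (hasFDerivAt_id (𝕜 := ℝ) x).inner ℝ (hasFDerivAt_id x)
  have : (fun y : EuclideanSpace ℝ (Fin N) => ‖y‖^2)
      = fun y : EuclideanSpace ℝ (Fin N) => (inner ℝ y y : ℝ) := by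
    funext y; rw [real_inner_self_eq_norm_sq]
  rw [this]
  exact h

lemma normsq_deriv_apply (x : EuclideanSpace ℝ (Fin N)) (i : Fin N) :
    ((fderivInnerCLM ℝ (x,x)).comp
        ((ContinuousLinearMap.id ℝ (EuclideanSpace ℝ (Fin N))).prod (ContinuousLinearMap.id ℝ _)))
      (EuclideanSpace.single i 1) = 2 * x i := by
  simp [fderivInnerCLM_apply, EuclideanSpace.inner_single_right, EuclideanSpace.inner_single_left,
    real_inner_comm]
  ring

lemma gaussian_hasFDerivAt (x : EuclideanSpace ℝ (Fin N)) :
    HasFDerivAt (fun y : EuclideanSpace ℝ (Fin N) => α * Complex.exp (-(β:ℂ) * ((‖y‖:ℂ))^2))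
      (((1 : ℝ →L[ℝ] ℝ).smulRight (α * Complex.exp (-(β:ℂ) * ((‖x‖:ℂ))^2) * (-(β:ℂ)))).comp
        ((fderivInnerCLM ℝ (x,x)).comp
          ((ContinuousLinearMap.id ℝ _).prod (ContinuousLinearMap.id ℝ _)))) x := by
  have hφ : HasDerivAt (fun r : ℝ => α * Complex.exp (-(β:ℂ) * (r:ℂ)))
      (α * Complex.exp (-(β:ℂ) * ((‖x‖^2 : ℝ):ℂ)) * (-(β:ℂ))) (‖x‖^2) := by
    have h0 : HasDerivAt (fun r : ℝ => ((r:ℝ):ℂ)) 1 (‖x‖^2) := by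
      simpa using (hasDerivAt_id (‖x‖^2)).ofReal_comp
    have h1 := (h0.const_mul (-(β:ℂ))).cexp.const_mul α
    simpa [mul_comm, mul_assoc, mul_left_comm] using h1
  have hcomp := hφ.hasFDerivAt.comp x (normsq_hasFDerivAt x)
  have heq : ((fun r : ℝ => α * Complex.exp (-(β:ℂ) * (r:ℂ)))
      ∘ (fun y : EuclideanSpace ℝ (Fin N) => ‖y‖^2))
      = fun y : EuclideanSpace ℝ (Fin N) => α * Complex.exp (-(β:ℂ) * ((‖y‖:ℂ))^2) := by
    funext y
    simp [Function.comp, Complex.ofReal_pow]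
  rw [heq] at hcomp
  refine hcomp.congr_fderiv ?_
  ext; simp

lemma pd_gaussian (i : Fin N) (x : EuclideanSpace ℝ (Fin N)) :
    pd (fun y : EuclideanSpace ℝ (Fin N) => α * Complex.exp (-(β:ℂ) * ((‖y‖:ℂ))^2)) i x
      = ((-2*β*(x i) : ℝ) : ℂ) * (α * Complex.exp (-(β:ℂ) * ((‖x‖:ℂ))^2)) := by
  rw [pd_eq (gaussian_hasFDerivAt α β x) i]
  rw [ContinuousLinearMap.comp_apply, normsq_deriv_apply]
  rw [ContinuousLinearMap.smulRight_apply]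
  simp [Complex.real_smul]
  ring

lemma pd2_gaussian (i : Fin N) (x : EuclideanSpace ℝ (Fin N)) :
    pd (pd (fun y : EuclideanSpace ℝ (Fin N) => α * Complex.exp (-(β:ℂ) * ((‖y‖:ℂ))^2)) i) i x
      = ((4*β^2*(x i)^2 - 2*β : ℝ) : ℂ) * (α * Complex.exp (-(β:ℂ) * ((‖x‖:ℂ))^2)) := by
  have hw : pd (fun y : EuclideanSpace ℝ (Fin N) => α * Complex.exp (-(β:ℂ) * ((‖y‖:ℂ))^2)) i
      = fun y : EuclideanSpace ℝ (Fin N) =>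
        (Complex.ofRealCLM.comp ((-2*β) • (EuclideanSpace.proj i))) y
          * (α * Complex.exp (-(β:ℂ) * ((‖y‖:ℂ))^2)) := by
    funext y
    rw [pd_gaussian]
    simp
  rw [hw]
  have hc : HasFDerivAt (fun y : EuclideanSpace ℝ (Fin N) =>
      (Complex.ofRealCLM.comp ((-2*β) • (EuclideanSpace.proj i))) y)
      (Complex.ofRealCLM.comp ((-2*β) • (EuclideanSpace.proj i))) x :=
    (Complex.ofRealCLM.comp ((-2*β) • (EuclideanSpace.proj i))).hasFDerivAt
  have hd := gaussian_hasFDerivAt α β (N := N) x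
  have hm := hc.fun_mul hd
  rw [pd_eq hm i]
  have hL := normsq_deriv_apply x i
  simp only [ContinuousLinearMap.add_apply, ContinuousLinearMap.smul_apply,
    ContinuousLinearMap.comp_apply, ContinuousLinearMap.smulRight_apply] at hL ⊢
  rw [hL]
  simp [EuclideanSpace.proj, Complex.real_smul]
  ring

lemma norm_gauss (x : EuclideanSpace ℝ (Fin N)) :
    ‖α * Complex.exp (-(β:ℂ) * ((‖x‖:ℂ))^2)‖ = ‖α‖ * Real.exp (-β * ‖x‖^2) := by
  rw [norm_mul]
  congr 1
  rw [Complex.norm_exp]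
  congr 1
  have : (-(β:ℂ) * ((‖x‖:ℂ))^2) = ((-β * ‖x‖^2 : ℝ) : ℂ) := by push_cast; ring
  rw [this, Complex.ofReal_re]

lemma lap_gaussian (x : EuclideanSpace ℝ (Fin N)) :
    lap (fun y : EuclideanSpace ℝ (Fin N) => α * Complex.exp (-(β:ℂ) * ((‖y‖:ℂ))^2)) x
      = ((4*β^2*‖x‖^2 - 2*β*N : ℝ) : ℂ) * (α * Complex.exp (-(β:ℂ) * ((‖x‖:ℂ))^2)) := by
  rw [lap]
  have : ∀ i, pd (pd (fun y : EuclideanSpace ℝ (Fin N) =>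
        α * Complex.exp (-(β:ℂ) * ((‖y‖:ℂ))^2)) i) i x
      = ((4*β^2*(x i)^2 - 2*β : ℝ) : ℂ) * (α * Complex.exp (-(β:ℂ) * ((‖x‖:ℂ))^2)) :=
    fun i => pd2_gaussian α β i x
  rw [Finset.sum_congr rfl (fun i _ => this i), ← Finset.sum_mul]
  congr 1
  push_cast
  have h2 : (∑ i, ((x i : ℝ):ℂ)^2) = ((‖x‖:ℝ):ℂ)^2 := by
    norm_cast
    exact (normsq_eq x).symm
  rw [Finset.sum_sub_distrib, ← Finset.mul_sum, h2, Finset.sum_const, Finset.card_univ,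
    Fintype.card_fin, nsmul_eq_mul]
  ring

lemma grad_gaussian (x : EuclideanSpace ℝ (Fin N)) :
    gradNormSq (fun y : EuclideanSpace ℝ (Fin N) => α * Complex.exp (-(β:ℂ) * ((‖y‖:ℂ))^2)) x
      = 4*β^2 * ‖α‖^2 * (‖x‖^2 * Real.exp (-(2*β) * ‖x‖^2)) := by
  rw [gradNormSq]
  have : ∀ i : Fin N, ‖pd (fun y : EuclideanSpace ℝ (Fin N) =>
        α * Complex.exp (-(β:ℂ) * ((‖y‖:ℂ))^2)) i x‖^2
      = (4*β^2*(x i)^2) * (‖α‖^2 * Real.exp (-(2*β) * ‖x‖^2)) := by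
    intro i
    rw [pd_gaussian, norm_mul, Complex.norm_real, norm_gauss]
    rw [Real.norm_eq_abs]
    rw [mul_pow, mul_pow, sq_abs, pow_two (Real.exp _), ← Real.exp_add]
    ring_nf
  rw [Finset.sum_congr rfl (fun i _ => this i), ← Finset.sum_mul]
  have hs : ∑ i : Fin N, 4*β^2*(x i)^2 = 4*β^2*‖x‖^2 := by
    rw [normsq_eq, Finset.mul_sum]
  rw [hs]
  ring

end aux

theorem second_order_HUP_gaussian_equality {N : ℕ} (hN : 1 ≤ N)
    (α : ℂ) (hα : α ≠ 0) (β : ℝ) (hβ : 0 < β)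
    (u : EuclideanSpace ℝ (Fin N) → ℂ)
    (hu : u = fun x => α * Complex.exp (-(β : ℂ) * ((‖x‖ : ℂ)) ^ 2)) :
    (∫ x, ‖lap u x‖ ^ 2) * (∫ x, ‖x‖ ^ 2 * gradNormSq u x) =
      ((N : ℝ) + 2) ^ 2 / 4 * (∫ x, gradNormSq u x) ^ 2 := by
  subst hu
  have hc : (0:ℝ) < 2*β := by linarith
  set J0 : ℝ := ∫ x : EuclideanSpace ℝ (Fin N), ‖x‖^(2*0) * Real.exp (-(2*β) * ‖x‖^2) with hJ0def
  set J1 : ℝ := ∫ x : EuclideanSpace ℝ (Fin N), ‖x‖^(2*1) * Real.exp (-(2*β) * ‖x‖^2) with hJ1def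
  set J2 : ℝ := ∫ x : EuclideanSpace ℝ (Fin N), ‖x‖^(2*2) * Real.exp (-(2*β) * ‖x‖^2) with hJ2def
  set A : ℝ := ‖α‖^2 with hAdef
  have hJ1 : J1 = ((N:ℝ)/(4*β)) * J0 := by
    rw [hJ1def, hJ0def]
    have := J_ratio hN 0 hc
    rw [this]
    congr 1
    push_cast
    ring
  have hJ2 : J2 = (((N:ℝ)+2)/(4*β)) * J1 := by
    rw [hJ2def, hJ1def]
    have := J_ratio hN 1 hc
    rw [this]
    congr 1
    push_cast
    ring
  have hgrad : (∫ x : EuclideanSpace ℝ (Fin N),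
      gradNormSq (fun y => α * Complex.exp (-(β:ℂ) * ((‖y‖:ℂ))^2)) x) = 4*β^2*A * J1 := by
    simp only [grad_gaussian]
    rw [hJ1def, ← integral_const_mul]
  have hxgrad : (∫ x : EuclideanSpace ℝ (Fin N),
      ‖x‖^2 * gradNormSq (fun y => α * Complex.exp (-(β:ℂ) * ((‖y‖:ℂ))^2)) x)
      = 4*β^2*A * J2 := by
    simp only [grad_gaussian]
    rw [hJ2def, ← integral_const_mul]
    congr 1
    funext x
    ring
  have hlap : (∫ x : EuclideanSpace ℝ (Fin N),
      ‖lap (fun y => α * Complex.exp (-(β:ℂ) * ((‖y‖:ℂ))^2)) x‖^2)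
      = (16*β^4*A) * J2 + ((-(16*β^3*N*A)) * J1 + (4*β^2*(N:ℝ)^2*A) * J0) := by
    have hpt : ∀ x : EuclideanSpace ℝ (Fin N),
        ‖lap (fun y => α * Complex.exp (-(β:ℂ) * ((‖y‖:ℂ))^2)) x‖^2
        = (16*β^4*A) * (‖x‖^(2*2) * Real.exp (-(2*β) * ‖x‖^2))
          + ((-(16*β^3*N*A)) * (‖x‖^(2*1) * Real.exp (-(2*β) * ‖x‖^2))
            + (4*β^2*(N:ℝ)^2*A) * (‖x‖^(2*0) * Real.exp (-(2*β) * ‖x‖^2))) := by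
      intro x
      rw [hAdef]
      rw [lap_gaussian, norm_mul, Complex.norm_real, norm_gauss, Real.norm_eq_abs]
      rw [mul_pow, sq_abs, mul_pow, pow_two (Real.exp _), ← Real.exp_add]
      ring_nf
    simp_rw [hpt]
    have hF1 : Integrable (fun x : EuclideanSpace ℝ (Fin N) =>
        (16*β^4*A) * (‖x‖^(2*2) * Real.exp (-(2*β) * ‖x‖^2))) := (integrableJ 2 hc).const_mul _
    have hF2 : Integrable (fun x : EuclideanSpace ℝ (Fin N) =>
        (-(16*β^3*(N:ℝ)*A)) * (‖x‖^(2*1) * Real.exp (-(2*β) * ‖x‖^2))) :=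
      (integrableJ 1 hc).const_mul _
    have hF3 : Integrable (fun x : EuclideanSpace ℝ (Fin N) =>
        (4*β^2*(N:ℝ)^2*A) * (‖x‖^(2*0) * Real.exp (-(2*β) * ‖x‖^2))) :=
      (integrableJ 0 hc).const_mul _
    have hg : Integrable (fun x : EuclideanSpace ℝ (Fin N) =>
        (-(16*β^3*(N:ℝ)*A)) * (‖x‖^(2*1) * Real.exp (-(2*β) * ‖x‖^2))
          + (4*β^2*(N:ℝ)^2*A) * (‖x‖^(2*0) * Real.exp (-(2*β) * ‖x‖^2))) := hF2.add hF3
    rw [MeasureTheory.integral_add hF1 hg, MeasureTheory.integral_add hF2 hF3,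
      integral_const_mul, integral_const_mul, integral_const_mul]
  rw [hgrad, hxgrad, hlap, hJ2, hJ1]
  have hβ' : β ≠ 0 := ne_of_gt hβ
  field_simp
  ring
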